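/- There exists a set E of irrational numbers, dense in ℝ, with the following property. Let x ∈ E, let m ≥ 1 be an integer, let c₁, c₂ > 0, and for each integer M ≥ 1 let Φ_M : ℝ → ℂ be a 1-periodic function satisfying |Φ_M(ξ)| ≥ c₁ whenever ‖ξ‖ ≤ c₂/M. Suppose (a_n)_{n ∈ ℤ∖{0}} are complex numbers for which there exist constants C > 0 and β > 0 with |a_n| ≥ C |n|^{−β} for all but finitely many n. Then for every δ > 0: limsup_{M → ∞} M^{2m+δ} · Σ_{n ∈ ℤ∖{0}} |2 sin(π n x)|^{2m} |Φ_M(n x)|² |a_n|² = +∞. -/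

import Mathlib

open Real Filter
open scoped ENNReal NNReal

noncomputable section

/-- `‖θ‖`: the distance from `θ` to the nearest integer. -/
def natDist (θ : ℝ) : ℝ := |θ - round θ|

lemma natDist_le (θ : ℝ) (k : ℤ) : natDist θ ≤ |θ - k| := by
  rcases le_or_gt (1/2) |θ - k| with h | h
  · exact (abs_sub_round θ).trans h
  · have h' := abs_lt.1 h
    have : round θ = k := by
      rw [round_eq, Int.floor_eq_iff]
      constructor <;> linarith [h'.1, h'.2]
    rw [natDist, this]

lemma natDist_pos_of_irrational {θ : ℝ} (h : Irrational θ) : 0 < natDist θ := by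
  rw [natDist, abs_pos, sub_ne_zero]
  exact h.ne_int _

lemma two_natDist_le_abs_sin (θ : ℝ) : 2 * natDist θ ≤ |Real.sin (π * θ)| := by
  set r := θ - round θ with hrdef
  have hr : |r| ≤ 1/2 := abs_sub_round θ
  have h1 : Real.sin (π * θ) = (-1 : ℝ) ^ (round θ) * Real.sin (π * r) := by
    rw [show π * θ = π * r + (round θ) * π by rw [hrdef]; ring,
      Real.sin_add_int_mul_pi]
  have habs1 : |((-1:ℝ)) ^ (round θ)| = 1 := by
    rcases Int.even_or_odd (round θ) with h | h
    · rw [h.neg_one_zpow]; norm_num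
    · rw [h.neg_one_zpow]; norm_num
  have h2 : |Real.sin (π * θ)| = |Real.sin (π * r)| := by
    rw [h1, abs_mul, habs1, one_mul]
  have h3 : |Real.sin (π * r)| = Real.sin (π * |r|) := by
    have hnn : 0 ≤ Real.sin (π * |r|) := by
      apply Real.sin_nonneg_of_nonneg_of_le_pi
      · positivity
      · nlinarith [Real.pi_pos, abs_nonneg r]
    rcases le_or_gt 0 r with h | h
    · rw [abs_of_nonneg h] at hnn ⊢
      exact abs_of_nonneg hnn
    · rw [abs_of_neg h] at hnn ⊢
      rw [show π * r = -(π * -r) by ring, Real.sin_neg, abs_neg]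
      exact abs_of_nonneg hnn
  have h4 : 2 / π * (π * |r|) ≤ Real.sin (π * |r|) := by
    apply Real.mul_le_sin
    · positivity
    · nlinarith [Real.pi_pos, abs_nonneg r]
  have hπ : (π : ℝ) ≠ 0 := Real.pi_ne_zero
  have : 2 / π * (π * |r|) = 2 * |r| := by field_simp
  rw [h2, h3, natDist, ← hrdef]
  linarith [this ▸ h4]

/-- there is a dense set `E` of irrational numbers such that for `x ∈ E`,
any order `m ≥ 1`, any family of 1-periodic transfer functions `Φ_M` with
`|Φ_M(ξ)| ≥ c₁` for `‖ξ‖ ≤ c₂/M`, and any spectral weights with `|a_n| ≥ C |n|^{−β}` for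
all but finitely many `n`, the pure-point mean square error satisfies
`limsup_M M^{2m+δ} 𝓔_pp(x, Φ_M) = ∞` for every `δ > 0`. -/
theorem pure_point_mse_lower_bound :
    ∃ E : Set ℝ, (∀ x ∈ E, Irrational x) ∧ Dense E ∧
      ∀ x ∈ E, ∀ m : ℕ, 1 ≤ m → ∀ c₁ c₂ : ℝ, 0 < c₁ → 0 < c₂ →
        ∀ Φ : ℕ → ℝ → ℂ,
          (∀ M : ℕ, 1 ≤ M → Function.Periodic (Φ M) 1) →
          (∀ M : ℕ, 1 ≤ M → ∀ ξ : ℝ, natDist ξ ≤ c₂ / M → c₁ ≤ ‖Φ M ξ‖) →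
          ∀ a : ℤ → ℂ,
            (∃ C : ℝ, 0 < C ∧ ∃ β : ℝ, 0 < β ∧
              {n : ℤ | n ≠ 0 ∧ ¬(C * |(n : ℝ)| ^ (-β) ≤ ‖a n‖)}.Finite) →
            ∀ δ : ℝ, 0 < δ →
              Filter.limsup
                (fun M : ℕ =>
                  ENNReal.ofReal ((M : ℝ) ^ (2 * (m : ℝ) + δ)) *
                    ∑' n : {n : ℤ // n ≠ 0},
                      ENNReal.ofReal
                        (|2 * Real.sin (π * (n : ℤ) * x)| ^ (2 * m) *
                          ‖Φ M ((n : ℤ) * x)‖ ^ 2 * ‖a (n : ℤ)‖ ^ 2))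
                Filter.atTop = ⊤ := by
  refine ⟨{x | Liouville x}, fun x hx => hx.irrational, dense_liouville, ?_⟩
  rintro x hx m hm c₁ c₂ hc₁ hc₂ Φ hper hlow a ⟨C, hC, β, hβ, hfin⟩ δ hδ
  have hxirr : Irrational x := hx.irrational
  set f := fun M : ℕ =>
      ENNReal.ofReal ((M : ℝ) ^ (2 * (m : ℝ) + δ)) *
        ∑' n : {n : ℤ // n ≠ 0},
          ENNReal.ofReal
            (|2 * Real.sin (π * (n : ℤ) * x)| ^ (2 * m) *
              ‖Φ M ((n : ℤ) * x)‖ ^ 2 * ‖a (n : ℤ)‖ ^ 2) with hf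
  -- bound for the exceptional set of the weights
  set N₀ : ℕ := hfin.toFinset.sup Int.natAbs with hN₀
  have ha : ∀ n : ℤ, n ≠ 0 → N₀ < n.natAbs → C * |(n : ℝ)| ^ (-β) ≤ ‖a n‖ := by
    intro n hn0 hlt
    by_contra h
    have hmem : n ∈ hfin.toFinset := hfin.mem_toFinset.2 ⟨hn0, h⟩
    exact absurd (Finset.le_sup (f := Int.natAbs) hmem) (not_le.2 hlt)
  -- exponent for the Liouville approximation
  set t : ℝ := 1 + (2 * β + 2) / δ with ht
  have ht1 : 1 < t := by
    rw [ht]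
    have : 0 < (2 * β + 2) / δ := by positivity
    linarith
  have hfreqq := (hx.liouvilleWith (t + 1)).frequently_lt_rpow_neg (lt_add_one t)
  set s : ℝ := 2 * (m : ℝ) + δ with hs
  have hs0 : 0 ≤ s := by positivity
  set K₀ : ℝ := (c₂ / 2) ^ s * 4 ^ (2 * m) * c₁ ^ 2 * C ^ 2 with hK₀
  have hK₀pos : 0 < K₀ := by positivity
  -- the main frequently claim
  have hfreq : ∀ K : ℝ≥0∞, K ≠ ⊤ → ∃ᶠ M in atTop, K ≤ f M := by
    intro K hKtop
    set R : ℝ := K.toReal with hR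
    rw [Filter.frequently_atTop]
    intro M₀
    -- eventually conditions on q
    have htend : Tendsto (fun q : ℕ => ((q : ℝ)) ^ (1 - t)) atTop (nhds 0) := by
      have h1 : Tendsto (fun y : ℝ => y ^ (-(t - 1))) atTop (nhds 0) :=
        tendsto_rpow_neg_atTop (by linarith)
      have h2 : Tendsto (fun q : ℕ => ((q : ℝ)) ^ (-(t - 1))) atTop (nhds 0) :=
        h1.comp (tendsto_natCast_atTop_atTop (R := ℝ))
      simpa [show -(t - 1) = 1 - t by ring] using h2
    have hE1 : ∀ᶠ q : ℕ in atTop, ((q : ℝ)) ^ (1 - t) ≤ 1 / 2 :=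
      htend.eventually_le_const (by norm_num)
    have hE2 : ∀ᶠ q : ℕ in atTop,
        ((q : ℝ)) ^ (1 - t) ≤ c₂ / (2 * (max M₀ 1 : ℕ)) := by
      apply htend.eventually_le_const
      have : (0:ℝ) < (max M₀ 1 : ℕ) := by
        have : 1 ≤ max M₀ 1 := le_max_right _ _
        exact_mod_cast lt_of_lt_of_le one_pos (by exact_mod_cast this)
      positivity
    have hE3 : ∀ᶠ q : ℕ in atTop, R ≤ K₀ * ((q : ℝ)) ^ (2 : ℝ) := by
      have h1 : Tendsto (fun q : ℕ => K₀ * ((q : ℝ)) ^ (2 : ℝ)) atTop atTop := by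
        apply Tendsto.const_mul_atTop hK₀pos
        exact (tendsto_rpow_atTop two_pos).comp tendsto_natCast_atTop_atTop
      exact h1.eventually_ge_atTop R
    have hE4 : ∀ᶠ q : ℕ in atTop, N₀ + 1 ≤ q := eventually_ge_atTop _
    obtain ⟨q, ⟨⟨hq1, hq2⟩, hq3, hq4⟩, p, hxp, happ⟩ :=
      (((hE1.and hE2).and (hE3.and hE4)).and_frequently hfreqq).exists
    have hqpos : 0 < q := lt_of_lt_of_le (Nat.succ_pos _) hq4
    have hQ : (0:ℝ) < (q : ℝ) := by exact_mod_cast hqpos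
    -- the distance from qx to the nearest integer
    set ε : ℝ := natDist ((q : ℝ) * x) with hε
    have hεpos : 0 < ε := natDist_pos_of_irrational (hxirr.natCast_mul hqpos.ne')
    have hεlt : ε < ((q : ℝ)) ^ (1 - t) := by
      have h1 : ε ≤ |(q : ℝ) * x - p| := natDist_le _ p
      have h2 : |(q : ℝ) * x - p| = (q : ℝ) * |x - p / q| := by
        rw [← abs_of_pos hQ, ← abs_mul]
        congr 1
        field_simp
        rw [abs_of_pos hQ]; ring
      have h3 : (q : ℝ) * |x - p / q| < (q : ℝ) * ((q : ℝ)) ^ (-t) := by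
        exact mul_lt_mul_of_pos_left happ hQ
      have h4 : (q : ℝ) * ((q : ℝ)) ^ (-t) = ((q : ℝ)) ^ (1 - t) := by
        rw [show (1 : ℝ) - t = 1 + -t by ring, Real.rpow_add hQ, Real.rpow_one]
      calc ε ≤ (q : ℝ) * |x - p / q| := h2 ▸ h1
        _ < _ := h4 ▸ h3
    have hεhalf : ε ≤ 1 / 2 := le_of_lt (hεlt.trans_le hq1)
    have hεsmall : ε < c₂ / (2 * (max M₀ 1 : ℕ)) := hεlt.trans_le hq2
    have hmax1 : (1:ℝ) ≤ (max M₀ 1 : ℕ) := by exact_mod_cast le_max_right M₀ 1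
    -- choose M
    set M : ℕ := ⌊c₂ / ε⌋₊ with hM
    have hdivpos : 0 < c₂ / ε := by positivity
    have hMle : (M : ℝ) ≤ c₂ / ε := Nat.floor_le hdivpos.le
    have hge2 : (2:ℝ) * (max M₀ 1 : ℕ) ≤ c₂ / ε := by
      rw [le_div_iff₀ hεpos]
      have := hεsmall
      rw [lt_div_iff₀ (by positivity : (0:ℝ) < 2 * (max M₀ 1 : ℕ))] at this
      linarith
    have hMge : c₂ / (2 * ε) ≤ (M : ℝ) := by
      have h1 : c₂ / ε < (M : ℝ) + 1 := Nat.lt_floor_add_one _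
      have h2 : (2:ℝ) ≤ c₂ / ε := le_trans (by linarith) hge2
      have h3 : c₂ / (2 * ε) = (c₂ / ε) / 2 := by ring
      -- c₂/ε ≥ 2 so (c₂/ε)/2 ≤ c₂/ε - 1 < M + 1 - 1... need (c₂/ε)/2 ≤ M
      rw [h3]
      linarith
    have hone : (1:ℝ) ≤ c₂ / (2 * ε) := by
      rw [le_div_iff₀ (by positivity)]
      rw [le_div_iff₀ hεpos] at hge2
      nlinarith [hmax1, hεpos]
    have hM1 : 1 ≤ M := by
      have : (1:ℝ) ≤ (M : ℝ) := le_trans hone hMge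
      exact_mod_cast this
    have hMpos : (0:ℝ) < (M : ℝ) := by
      have : 0 < M := hM1
      exact_mod_cast this
    have hMM₀ : M₀ ≤ M := by
      have h1 : ((max M₀ 1 : ℕ) : ℝ) ≤ c₂ / (2 * ε) := by
        rw [le_div_iff₀ (by positivity)]
        rw [le_div_iff₀ hεpos] at hge2
        linarith
      have h2 : ((max M₀ 1 : ℕ) : ℝ) ≤ (M : ℝ) := h1.trans hMge
      exact le_trans (le_max_left _ _) (by exact_mod_cast h2)
    refine ⟨M, hMM₀, ?_⟩
    -- the chosen index
    have hq0 : ((q : ℤ)) ≠ 0 := by exact_mod_cast hqpos.ne'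
    -- bound the weight
    have hweight : C * ((q : ℝ)) ^ (-β) ≤ ‖a (q : ℤ)‖ := by
      have h1 := ha (q : ℤ) hq0 (by simpa using lt_of_lt_of_le (Nat.lt_succ_self N₀) hq4)
      simpa [abs_of_pos hQ] using h1
    -- bound the transfer function
    have hΦ : c₁ ≤ ‖Φ M ((q : ℝ) * x)‖ := by
      apply hlow M hM1
      rw [← hε, le_div_iff₀ hMpos, mul_comm]
      rw [le_div_iff₀ hεpos] at hMle
      exact hMle
    -- bound the sine
    have hsin : 4 * ε ≤ |2 * Real.sin (π * (q : ℝ) * x)| := by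
      rw [mul_assoc, abs_mul, abs_two]
      have h1 := two_natDist_le_abs_sin ((q : ℝ) * x)
      rw [← hε] at h1
      linarith
    -- the single term of the sum
    have hTlow : (4 * ε) ^ (2 * m) * c₁ ^ 2 * (C * ((q : ℝ)) ^ (-β)) ^ 2 ≤
        |2 * Real.sin (π * (q : ℝ) * x)| ^ (2 * m) *
          ‖Φ M ((q : ℝ) * x)‖ ^ 2 * ‖a (q : ℤ)‖ ^ 2 := by
      gcongr
    -- main real inequality
    have hMs : (c₂ / (2 * ε)) ^ s ≤ ((M : ℝ)) ^ s :=
      Real.rpow_le_rpow (by positivity) hMge hs0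
    have hA : (c₂ / (2 * ε)) ^ s = (c₂ / 2) ^ s * ε ^ (-s) := by
      rw [show c₂ / (2 * ε) = (c₂ / 2) / ε by ring,
        Real.div_rpow (by positivity) hεpos.le, Real.rpow_neg hεpos.le, div_eq_mul_inv]
    have hB : (4 * ε) ^ (2 * m) = 4 ^ (2 * m) * ε ^ (2 * m) := mul_pow _ _ _
    have hCq : (C * ((q : ℝ)) ^ (-β)) ^ 2 = C ^ 2 * ((q : ℝ)) ^ (-(2 * β)) := by
      rw [mul_pow]
      congr 1
      rw [← Real.rpow_natCast (((q : ℝ)) ^ (-β)) 2, ← Real.rpow_mul hQ.le]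
      congr 1
      push_cast
      ring
    have hCe : ε ^ (2 * m) * ε ^ (-s) = ε ^ (-δ) := by
      rw [← Real.rpow_natCast ε (2 * m), ← Real.rpow_add hεpos]
      congr 1
      rw [hs]
      push_cast
      ring
    have hE : ((q : ℝ)) ^ (2 * β + 2) ≤ ε ^ (-δ) := by
      have h1 : (((q : ℝ)) ^ (1 - t)) ^ (-δ) ≤ ε ^ (-δ) :=
        Real.rpow_le_rpow_of_nonpos hεpos hεlt.le (by linarith)
      have h2 : (((q : ℝ)) ^ (1 - t)) ^ (-δ) = ((q : ℝ)) ^ (2 * β + 2) := by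
        rw [← Real.rpow_mul hQ.le]
        congr 1
        rw [ht]
        field_simp
        ring
      linarith [h2 ▸ h1]
    have hF : ((q : ℝ)) ^ (2 * β + 2) * ((q : ℝ)) ^ (-(2 * β)) = ((q : ℝ)) ^ (2 : ℝ) := by
      rw [← Real.rpow_add hQ]
      norm_num
    have key : R ≤ ((M : ℝ)) ^ s *
        (|2 * Real.sin (π * (q : ℝ) * x)| ^ (2 * m) *
          ‖Φ M ((q : ℝ) * x)‖ ^ 2 * ‖a (q : ℤ)‖ ^ 2) := by
      have step1 : K₀ * (ε ^ (-δ) * ((q : ℝ)) ^ (-(2 * β))) ≤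
          (c₂ / (2 * ε)) ^ s * ((4 * ε) ^ (2 * m) * c₁ ^ 2 * (C * ((q : ℝ)) ^ (-β)) ^ 2) := by
        rw [hA, hB, hCq]
        have heq : (c₂ / 2) ^ s * ε ^ (-s) *
            (4 ^ (2 * m) * ε ^ (2 * m) * c₁ ^ 2 * (C ^ 2 * ((q : ℝ)) ^ (-(2 * β)))) =
            K₀ * ((ε ^ (2 * m) * ε ^ (-s)) * ((q : ℝ)) ^ (-(2 * β))) := by
          rw [hK₀]; ring
        rw [heq, hCe]
      have step2 : K₀ * (((q : ℝ)) ^ (2 : ℝ)) ≤ K₀ * (ε ^ (-δ) * ((q : ℝ)) ^ (-(2 * β))) := by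
        apply mul_le_mul_of_nonneg_left _ hK₀pos.le
        rw [← hF]
        apply mul_le_mul_of_nonneg_right hE (by positivity)
      have step3 : (c₂ / (2 * ε)) ^ s * ((4 * ε) ^ (2 * m) * c₁ ^ 2 * (C * ((q : ℝ)) ^ (-β)) ^ 2)
          ≤ ((M : ℝ)) ^ s * (|2 * Real.sin (π * (q : ℝ) * x)| ^ (2 * m) *
            ‖Φ M ((q : ℝ) * x)‖ ^ 2 * ‖a (q : ℤ)‖ ^ 2) := by
        apply mul_le_mul hMs hTlow (by positivity) (by positivity)
      have hq3' : R ≤ K₀ * ((q : ℝ)) ^ (2 : ℝ) := hq3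
      linarith
    -- transfer to ENNReal
    have hterm : ENNReal.ofReal
          (|2 * Real.sin (π * (q : ℝ) * x)| ^ (2 * m) *
            ‖Φ M ((q : ℝ) * x)‖ ^ 2 * ‖a (q : ℤ)‖ ^ 2) ≤
        ∑' n : {n : ℤ // n ≠ 0},
          ENNReal.ofReal
            (|2 * Real.sin (π * (n : ℤ) * x)| ^ (2 * m) *
              ‖Φ M ((n : ℤ) * x)‖ ^ 2 * ‖a (n : ℤ)‖ ^ 2) := by
      have h0 := ENNReal.le_tsum (f := fun n : {n : ℤ // n ≠ 0} =>
        ENNReal.ofReal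
          (|2 * Real.sin (π * (n : ℤ) * x)| ^ (2 * m) *
            ‖Φ M ((n : ℤ) * x)‖ ^ 2 * ‖a (n : ℤ)‖ ^ 2)) ⟨(q : ℤ), hq0⟩
      have hc : (((q : ℤ)) : ℝ) = (q : ℝ) := Int.cast_natCast q
      simpa [hc] using h0
    calc K = ENNReal.ofReal R := by
          rw [hR, ENNReal.ofReal_toReal hKtop]
      _ ≤ ENNReal.ofReal (((M : ℝ)) ^ s *
            (|2 * Real.sin (π * (q : ℝ) * x)| ^ (2 * m) *
              ‖Φ M ((q : ℝ) * x)‖ ^ 2 * ‖a (q : ℤ)‖ ^ 2)) := ENNReal.ofReal_le_ofReal key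
      _ = ENNReal.ofReal (((M : ℝ)) ^ s) * ENNReal.ofReal
            (|2 * Real.sin (π * (q : ℝ) * x)| ^ (2 * m) *
              ‖Φ M ((q : ℝ) * x)‖ ^ 2 * ‖a (q : ℤ)‖ ^ 2) := by
          rw [ENNReal.ofReal_mul (by positivity)]
      _ ≤ f M := by
          rw [hf]
          exact mul_le_mul_right hterm _
  -- conclude
  by_contra hne
  have hlt : limsup f atTop < ⊤ := lt_top_iff_ne_top.2 hne
  have hK : limsup f atTop + 1 ≠ ⊤ := by
    rw [ENNReal.add_ne_top]
    exact ⟨hne, ENNReal.one_ne_top⟩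
  have hev : ∀ᶠ M in atTop, f M < limsup f atTop + 1 :=
    Filter.eventually_lt_of_limsup_lt (ENNReal.lt_add_right hne one_ne_zero)
  obtain ⟨M, h1, h2⟩ := ((hfreq _ hK).and_eventually hev).exists
  exact absurd h1 (not_le.2 h2)
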